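/- (Beck–Chevalley condition) Let C be a locally cartesian closed category and let the square with h : D → C, k : D → A, f : C → B, g : A → B (f∘h = g∘k) be a pullback. Then the canonical natural transformations Σ_k ∘ h^* → g^* ∘ Σ_f and f^* ∘ Π_g → Π_h ∘ k^* are natural isomorphisms. -/

import Mathlib

open CategoryTheory CategoryTheory.Limits

universe v u

variable {C : Type u} [Category.{v} C] [HasPullbacks C]

/-- The pasted pullback square used for Beck–Chevalley. -/
lemma bc_paste {A B C₀ D : C} (h : D ⟶ C₀) (k : D ⟶ A) (f : C₀ ⟶ B) (g : A ⟶ B)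
    (sq : IsPullback h k f g) (x : Over C₀) :
    IsPullback (pullback.fst x.hom h) (pullback.snd x.hom h ≫ k) (x.hom ≫ f) g :=
  (IsPullback.of_hasPullback x.hom h).paste_vert sq

/-- Beck–Chevalley isomorphism for the left adjoints. -/
noncomputable def bcIso {A B C₀ D : C} (h : D ⟶ C₀) (k : D ⟶ A) (f : C₀ ⟶ B) (g : A ⟶ B)
    (sq : IsPullback h k f g) :
    (Over.pullback h ⋙ Over.map k) ≅ (Over.map f ⋙ Over.pullback g) :=
  NatIso.ofComponents
    (fun x => Over.isoMk (bc_paste h k f g sq x).isoPullback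
      ((bc_paste h k f g sq x).isoPullback_hom_snd))
    (by
      intro x y u
      ext
      apply pullback.hom_ext
      · simp [IsPullback.isoPullback_hom_fst]
        erw [pullback.lift_fst, pullback.lift_fst, IsPullback.isoPullback_hom_fst_assoc]
      · simp [IsPullback.isoPullback_hom_snd]
        erw [pullback.lift_snd_assoc, pullback.lift_snd, IsPullback.isoPullback_hom_snd])

/-- Beck–Chevalley: for a pullback square `h : D ⟶ C₀`, `k : D ⟶ A`, `f : C₀ ⟶ B`,
`g : A ⟶ B`, the canonical transformations `Σ_k ∘ h^* ⟶ g^* ∘ Σ_f` and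
`f^* ∘ Π_g ⟶ Π_h ∘ k^*` are natural isomorphisms. -/
theorem stmt9 {C : Type u} [Category.{v} C] [HasPullbacks C]
    {A B C₀ D : C} (h : D ⟶ C₀) (k : D ⟶ A) (f : C₀ ⟶ B) (g : A ⟶ B)
    (sq : IsPullback h k f g)
    (Pig : Over A ⥤ Over B) (Pih : Over D ⥤ Over C₀)
    (adjg : Over.pullback g ⊣ Pig) (adjh : Over.pullback h ⊣ Pih) :
    Nonempty ((Over.pullback h ⋙ Over.map k) ≅ (Over.map f ⋙ Over.pullback g)) ∧
    Nonempty ((Pig ⋙ Over.pullback f) ≅ (Over.pullback k ⋙ Pih)) := by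
  refine ⟨⟨bcIso h k f g sq⟩, ⟨?_⟩⟩
  have adj1 : (Over.pullback h ⋙ Over.map k) ⊣ (Over.pullback k ⋙ Pih) :=
    adjh.comp (Over.mapPullbackAdj k)
  have adj2 : (Over.map f ⋙ Over.pullback g) ⊣ (Pig ⋙ Over.pullback f) :=
    (Over.mapPullbackAdj f).comp adjg
  exact (Adjunction.rightAdjointUniq (adj1.ofNatIsoLeft (bcIso h k f g sq)) adj2).symm
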